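/- For every μ > 0 and r ∈ ℕ with r ≥ 2, if k is sufficiently large, R is a k-vertex graph with δ(R) ≥ (1 − 1/r + μ)k, and H_1, H_2 are two vertex-disjoint copies of K_r in R, then there exist copies B_1,...,B_ℓ of K_{r+1} in R with ℓ ≤ r², such that V(H_1) ⊆ V(B_1), V(H_2) ⊆ V(B_ℓ), and |V(B_i) ∩ V(B_{i+1})| = r − 1 for every i ∈ [ℓ−1]. -/

import Mathlib

open Finset
open scoped Classical

variable {k : ℕ}

noncomputable def commonNbrs (R : SimpleGraph (Fin k)) (T : Finset (Fin k)) : Finset (Fin k) :=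
  Finset.univ.filter fun v => ∀ x ∈ T, R.Adj x v

lemma mem_commonNbrs {R : SimpleGraph (Fin k)} {T : Finset (Fin k)} {v : Fin k} :
    v ∈ commonNbrs R T ↔ ∀ x ∈ T, R.Adj x v := by
  simp [commonNbrs]

lemma not_mem_of_mem_commonNbrs {R : SimpleGraph (Fin k)} {T : Finset (Fin k)} {v : Fin k}
    (h : v ∈ commonNbrs R T) : v ∉ T :=
  fun hv => R.loopless.irrefl v (mem_commonNbrs.1 h v hv)

def CliqueChain (R : SimpleGraph (Fin k)) (r m : ℕ) (T : ℕ → Finset (Fin k)) : Prop :=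
  (∀ i, i ≤ m → R.IsNClique r (T i)) ∧ ∀ i, i < m → (T i ∩ T (i + 1)).card = r - 1

lemma CliqueChain.concat {R : SimpleGraph (Fin k)} {r m m' : ℕ} {T T' : ℕ → Finset (Fin k)}
    (h1 : CliqueChain R r m T) (h2 : CliqueChain R r m' T') (he : T m = T' 0) :
    CliqueChain R r (m + m') (fun i => if i ≤ m then T i else T' (i - m)) := by
  constructor
  · intro i hi
    by_cases h : i ≤ m
    · simpa [h] using h1.1 i h
    · simp only [if_neg h]
      exact h2.1 (i - m) (by omega)
  · intro i hi
    by_cases h : i < m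
    · have ha : i ≤ m := by omega
      have hb : i + 1 ≤ m := by omega
      simpa [ha, hb] using h1.2 i h
    · have e1 : (if i ≤ m then T i else T' (i - m)) = T' (i - m) := by
        by_cases h' : i ≤ m
        · have : i = m := by omega
          simp [this, he]
        · simp [h']
      have e2 : (if i + 1 ≤ m then T (i + 1) else T' (i + 1 - m)) = T' (i - m + 1) := by
        have hn : ¬ (i + 1 ≤ m) := by omega
        simp only [if_neg hn]
        congr 1
        omega
      simp only [e1, e2]
      exact h2.2 (i - m) (by omega)

lemma concat_last {m m' : ℕ} {T T' : ℕ → Finset (Fin k)} (he : T m = T' 0)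
    {Q : Finset (Fin k)} (h : Q ⊆ T' m') :
    Q ⊆ (fun i => if i ≤ m then T i else T' (i - m)) (m + m') := by
  by_cases h0 : m' = 0
  · subst h0
    simpa [he] using h
  · have hn : ¬ (m + m' ≤ m) := by omega
    show Q ⊆ if m + m' ≤ m then T (m + m') else T' (m + m' - m)
    rw [if_neg hn]
    have : m + m' - m = m' := by omega
    rw [this]
    exact h

lemma common_card {r : ℕ} {R : SimpleGraph (Fin k)} {μ : ℝ}
    (hr : 1 ≤ r) (hμ : 0 < μ) (hμr : μ ≤ 1 / r)
    (hdeg : ∀ v, (1 - 1 / (r : ℝ) + μ) * k ≤ ((R.neighborSet v).ncard : ℝ))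
    (T : Finset (Fin k)) (hT : T.card ≤ r) :
    μ * k ≤ ((commonNbrs R T).card : ℝ) := by
  have hr0 : (0 : ℝ) < r := by exact_mod_cast hr
  have hk0 : (0 : ℝ) ≤ k := by positivity
  -- degree facts
  have hdeg' : ∀ v : Fin k, ((Finset.univ.filter fun w => ¬ R.Adj v w).card : ℝ)
      ≤ (1 / r - μ) * k := by
    intro v
    have h1 : (R.neighborSet v).ncard = R.degree v := by
      rw [Set.ncard_eq_toFinset_card']
      congr 1
    have h2 : (Finset.univ.filter fun w => ¬ R.Adj v w) = Finset.univ \ R.neighborFinset v := by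
      ext w
      simp [SimpleGraph.mem_neighborFinset]
    have h3 : (Finset.univ \ R.neighborFinset v).card = k - R.degree v := by
      rw [Finset.card_sdiff_of_subset (Finset.subset_univ _), Finset.card_univ, Fintype.card_fin]
      rfl
    have h4 : R.degree v ≤ k := by
      calc R.degree v ≤ Fintype.card (Fin k) := by
            apply Finset.card_le_card (Finset.subset_univ _)
        _ = k := Fintype.card_fin k
    have h5 := hdeg v
    rw [h1] at h5
    rw [h2, h3]
    have : ((k - R.degree v : ℕ) : ℝ) = (k : ℝ) - R.degree v := by
      push_cast [Nat.cast_sub h4]; ring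
    rw [this]
    linarith
  have hsub : Finset.univ \ commonNbrs R T ⊆ T.biUnion (fun x => Finset.univ.filter fun w => ¬ R.Adj x w) := by
    intro v hv
    simp only [Finset.mem_sdiff, Finset.mem_univ, true_and, mem_commonNbrs] at hv
    push_neg at hv
    obtain ⟨x, hx, hax⟩ := hv
    simp only [Finset.mem_biUnion, Finset.mem_filter, Finset.mem_univ, true_and]
    exact ⟨x, hx, hax⟩
  have hcard : ((Finset.univ \ commonNbrs R T).card : ℝ) ≤ (r : ℝ) * ((1 / r - μ) * k) := by
    have h1 : (Finset.univ \ commonNbrs R T).card ≤ ∑ x ∈ T, (Finset.univ.filter fun w => ¬ R.Adj x w).card :=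
      le_trans (Finset.card_le_card hsub) (Finset.card_biUnion_le)
    have h2 : ((Finset.univ \ commonNbrs R T).card : ℝ) ≤ ∑ x ∈ T, ((Finset.univ.filter fun w => ¬ R.Adj x w).card : ℝ) := by
      exact_mod_cast h1
    have h3 : ∑ x ∈ T, ((Finset.univ.filter fun w => ¬ R.Adj x w).card : ℝ) ≤ T.card * ((1 / r - μ) * k) := by
      calc ∑ x ∈ T, ((Finset.univ.filter fun w => ¬ R.Adj x w).card : ℝ)
          ≤ ∑ _x ∈ T, (1 / r - μ) * k := Finset.sum_le_sum (fun x _ => hdeg' x)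
        _ = T.card * ((1 / r - μ) * k) := by rw [Finset.sum_const, nsmul_eq_mul]
    have h4 : (T.card : ℝ) * ((1 / r - μ) * k) ≤ (r : ℝ) * ((1 / r - μ) * k) := by
      apply mul_le_mul_of_nonneg_right
      · exact_mod_cast hT
      · have : 0 ≤ 1 / (r:ℝ) - μ := by linarith
        positivity
    linarith
  have hsd : ((Finset.univ \ commonNbrs R T).card : ℝ) = (k : ℝ) - (commonNbrs R T).card := by
    rw [Finset.card_sdiff_of_subset (Finset.subset_univ _)]
    have hle : (commonNbrs R T).card ≤ k := by
      calc (commonNbrs R T).card ≤ Fintype.card (Fin k) :=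
            Finset.card_le_card (Finset.subset_univ _)
        _ = k := Fintype.card_fin k
    rw [Finset.card_univ, Fintype.card_fin]
    push_cast [Nat.cast_sub hle]
    ring
  rw [hsd] at hcard
  have hexp : (r : ℝ) * ((1 / r - μ) * k) = k - r * μ * k := by
    field_simp
  rw [hexp] at hcard
  have hrμ : μ * k ≤ (r : ℝ) * μ * k := by
    have h1 : (1:ℝ) ≤ r := by exact_mod_cast hr
    nlinarith [mul_nonneg (le_of_lt hμ) hk0]
  linarith

lemma exists_avoid {r : ℕ} {R : SimpleGraph (Fin k)} {μ : ℝ}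
    (hr : 1 ≤ r) (hμ : 0 < μ) (hμr : μ ≤ 1 / r)
    (hdeg : ∀ v, (1 - 1 / (r : ℝ) + μ) * k ≤ ((R.neighborSet v).ncard : ℝ))
    (hbig : (2 * r + 2 : ℝ) ≤ μ * k)
    (T A : Finset (Fin k)) (hT : T.card ≤ r) (hA : A.card ≤ 2 * r + 1) :
    ∃ z, z ∈ commonNbrs R T ∧ z ∉ A := by
  have h1 := common_card hr hμ hμr hdeg T hT
  have hAr : (A.card : ℝ) ≤ 2 * r + 1 := by exact_mod_cast hA
  have h2 : (A.card : ℝ) < (commonNbrs R T).card := by linarith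
  have h3 : A.card < (commonNbrs R T).card := by exact_mod_cast h2
  have h4 : ¬ commonNbrs R T ⊆ A := fun h => absurd (Finset.card_le_card h) (by omega)
  exact Finset.not_subset.1 h4
lemma swap_step {r : ℕ} {R : SimpleGraph (Fin k)} {S : Finset (Fin k)} {x z : Fin k}
    (hS : R.IsNClique r S) (hx : x ∈ S) (hz : ∀ v ∈ S.erase x, R.Adj v z) (hzS : z ∉ S) :
    R.IsNClique r (insert z (S.erase x)) ∧ (S ∩ insert z (S.erase x)) = S.erase x := by
  have hr1 : 1 ≤ r := by
    have h1 := hS.card_eq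
    have h2 : 0 < S.card := Finset.card_pos.2 ⟨x, hx⟩
    omega
  have hze : z ∉ S.erase x := fun h => hzS (Finset.mem_of_mem_erase h)
  constructor
  · constructor
    · rw [Finset.coe_insert]
      apply SimpleGraph.IsClique.insert
      · exact hS.isClique.subset (by
          intro v hv
          exact Finset.mem_of_mem_erase hv)
      · intro b hb _
        exact (hz b hb).symm
    · rw [Finset.card_insert_of_notMem hze, Finset.card_erase_of_mem hx, hS.card_eq]
      omega
  · ext v
    simp only [Finset.mem_inter, Finset.mem_insert, Finset.mem_erase]
    constructor
    · rintro ⟨hvS, hv | hv⟩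
      · exact absurd (hv ▸ hvS) hzS
      · exact hv
    · rintro ⟨hne, hvS⟩
      exact ⟨hvS, Or.inr ⟨hne, hvS⟩⟩

lemma swap_chain {r : ℕ} {R : SimpleGraph (Fin k)} {S : Finset (Fin k)} {x z : Fin k}
    (hS : R.IsNClique r S) (hx : x ∈ S) (hz : ∀ v ∈ S.erase x, R.Adj v z) (hzS : z ∉ S) :
    CliqueChain R r 1 (fun i => if i = 0 then S else insert z (S.erase x)) := by
  obtain ⟨hc, hi⟩ := swap_step hS hx hz hzS
  constructor
  · intro i hil
    by_cases h : i = 0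
    · simpa [h] using hS
    · simpa [h] using hc
  · intro i hil
    have h0 : i = 0 := by omega
    subst h0
    show (S ∩ insert z (S.erase x)).card = r - 1
    rw [hi, Finset.card_erase_of_mem hx, hS.card_eq]

lemma phase {r : ℕ} {R : SimpleGraph (Fin k)} {μ : ℝ}
    (hr : 2 ≤ r) (hμ : 0 < μ) (hμr : μ ≤ 1 / r)
    (hdeg : ∀ v, (1 - 1 / (r : ℝ) + μ) * k ≤ ((R.neighborSet v).ncard : ℝ))
    (hbig : (2 * r + 2 : ℝ) ≤ μ * k) :
    ∀ b : ℕ, ∀ S P : Finset (Fin k), ∀ y : Fin k,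
      R.IsNClique r S → P ⊆ S → (∀ p ∈ P, R.Adj p y) → P.card < r →
      (S.filter fun v => ¬ R.Adj v y).card ≤ b →
      ∃ s, s ≤ max b 1 ∧ ∃ T : ℕ → Finset (Fin k),
        T 0 = S ∧ CliqueChain R r s T ∧ insert y P ⊆ T s := by
  intro b
  induction b with
  | zero =>
    intro S P y hS hPS hPy hPr hf
    have hfe : (S.filter fun v => ¬ R.Adj v y) = ∅ := Finset.card_eq_zero.1 (by omega)
    have hall : ∀ v ∈ S, R.Adj v y := by
      intro v hv
      by_contra hc
      have : v ∈ S.filter fun v => ¬ R.Adj v y := Finset.mem_filter.2 ⟨hv, hc⟩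
      simp [hfe] at this
    have hyS : y ∉ S := fun h => R.loopless.irrefl y (hall y h)
    have hnsub : ¬ S ⊆ P := by
      intro h
      have h1 := Finset.card_le_card h
      have h2 := hS.card_eq
      omega
    obtain ⟨x, hxS, hxP⟩ := Finset.not_subset.1 hnsub
    have hz : ∀ v ∈ S.erase x, R.Adj v y := fun v hv => hall v (Finset.mem_of_mem_erase hv)
    refine ⟨1, by omega, fun i => if i = 0 then S else insert y (S.erase x), by simp,
      swap_chain hS hxS hz hyS, ?_⟩
    simp only [if_neg Nat.one_ne_zero]
    intro p hp
    rcases Finset.mem_insert.1 hp with h | h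
    · exact h ▸ Finset.mem_insert_self _ _
    · exact Finset.mem_insert_of_mem
        (Finset.mem_erase.2 ⟨fun he => hxP (he ▸ h), hPS h⟩)
  | succ b ih =>
    intro S P y hS hPS hPy hPr hf
    by_cases hcb : (S.filter fun v => ¬ R.Adj v y).card ≤ b
    · obtain ⟨s, hs, hT⟩ := ih S P y hS hPS hPy hPr hcb
      exact ⟨s, by omega, hT⟩
    have hceq : (S.filter fun v => ¬ R.Adj v y).card = b + 1 := by omega
    by_cases hyS : y ∈ S
    · refine ⟨0, by omega, fun _ => S, rfl,
        ⟨fun i _ => hS, fun i h => absurd h (by omega)⟩, ?_⟩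
      intro p hp
      rcases Finset.mem_insert.1 hp with h | h
      · exact h ▸ hyS
      · exact hPS h
    -- y ∉ S
    have hxf : ∃ x, x ∈ S.filter fun v => ¬ R.Adj v y := by
      have h0 : 0 < (S.filter fun v => ¬ R.Adj v y).card := by omega
      obtain ⟨x, hx⟩ := Finset.card_pos.1 h0
      exact ⟨x, hx⟩
    obtain ⟨x, hxmem⟩ := hxf
    obtain ⟨hxS, hxA⟩ := Finset.mem_filter.1 hxmem
    have hxP : x ∉ P := fun h => hxA (hPy x h)
    by_cases hb1 : b = 0
    · -- exactly one bad vertex: swap x ↔ y directly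
      subst hb1
      have hfx : (S.filter fun v => ¬ R.Adj v y) = {x} := by
        apply Finset.eq_singleton_iff_unique_mem.2
        refine ⟨hxmem, ?_⟩
        intro w hw
        by_contra hne
        have h2 : ({w, x} : Finset (Fin k)) ⊆ S.filter fun v => ¬ R.Adj v y := by
          intro u hu
          rcases Finset.mem_insert.1 hu with h | h
          · exact h ▸ hw
          · exact (Finset.mem_singleton.1 h) ▸ hxmem
        have h3 := Finset.card_le_card h2
        rw [Finset.card_insert_of_notMem (by simp [hne]), Finset.card_singleton] at h3
        omega
      have hz : ∀ v ∈ S.erase x, R.Adj v y := by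
        intro v hv
        obtain ⟨hvx, hvS⟩ := Finset.mem_erase.1 hv
        by_contra hc
        have hmem : v ∈ S.filter fun u => ¬ R.Adj u y := Finset.mem_filter.2 ⟨hvS, hc⟩
        rw [hfx] at hmem
        exact hvx (Finset.mem_singleton.1 hmem)
      refine ⟨1, by omega, fun i => if i = 0 then S else insert y (S.erase x), by simp,
        swap_chain hS hxS hz hyS, ?_⟩
      simp only [if_neg Nat.one_ne_zero]
      intro p hp
      rcases Finset.mem_insert.1 hp with h | h
      · exact h ▸ Finset.mem_insert_self _ _
      · exact Finset.mem_insert_of_mem (Finset.mem_erase.2 ⟨fun he => hxP (he ▸ h), hPS h⟩)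
    · -- at least two bad vertices: intermediate swap
      have hb1' : 1 ≤ b := by omega
      have hyE : y ∉ S.erase x := fun h => hyS (Finset.mem_of_mem_erase h)
      have hTcard : (insert y (S.erase x)).card ≤ r := by
        rw [Finset.card_insert_of_notMem hyE, Finset.card_erase_of_mem hxS, hS.card_eq]
        omega
      obtain ⟨z, hzc, hzx⟩ := exists_avoid (show 1 ≤ r by omega) hμ hμr hdeg hbig
        (insert y (S.erase x)) {x} hTcard (by simp)
      have hzxne : z ≠ x := fun h => hzx (Finset.mem_singleton.2 h)
      have hzy : R.Adj y z := mem_commonNbrs.1 hzc y (Finset.mem_insert_self _ _)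
      have hzE : ∀ v ∈ S.erase x, R.Adj v z := fun v hv =>
        mem_commonNbrs.1 hzc v (Finset.mem_insert_of_mem hv)
      have hznE : z ∉ insert y (S.erase x) := not_mem_of_mem_commonNbrs hzc
      have hzS : z ∉ S := by
        intro h
        exact hznE (Finset.mem_insert_of_mem (Finset.mem_erase.2 ⟨hzxne, h⟩))
      obtain ⟨hS', hinter⟩ := swap_step hS hxS hzE hzS
      have hPS' : P ⊆ insert z (S.erase x) := by
        intro p hp
        exact Finset.mem_insert_of_mem (Finset.mem_erase.2 ⟨fun he => hxP (he ▸ hp), hPS hp⟩)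
      have hfS' : ((insert z (S.erase x)).filter fun v => ¬ R.Adj v y).card ≤ b := by
        have hsub : ((insert z (S.erase x)).filter fun v => ¬ R.Adj v y)
            ⊆ (S.filter fun v => ¬ R.Adj v y).erase x := by
          intro v hv
          obtain ⟨hvS', hva⟩ := Finset.mem_filter.1 hv
          rcases Finset.mem_insert.1 hvS' with h | h
          · exact absurd (h ▸ hzy.symm) (h ▸ hva)
          · obtain ⟨hvx, hvS⟩ := Finset.mem_erase.1 h
            exact Finset.mem_erase.2 ⟨hvx, Finset.mem_filter.2 ⟨hvS, hva⟩⟩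
        calc ((insert z (S.erase x)).filter fun v => ¬ R.Adj v y).card
            ≤ ((S.filter fun v => ¬ R.Adj v y).erase x).card := Finset.card_le_card hsub
          _ = b := by rw [Finset.card_erase_of_mem hxmem, hceq]; omega
      obtain ⟨s', hs', T', hT'0, hch', hfin'⟩ := ih (insert z (S.erase x)) P y hS' hPS' hPy hPr hfS'
      have hchain1 : CliqueChain R r 1 (fun i => if i = 0 then S else insert z (S.erase x)) :=
        swap_chain hS hxS hzE hzS
      have he : (fun i => if i = 0 then S else insert z (S.erase x)) 1 = T' 0 := by
        simp [hT'0]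
      refine ⟨1 + s', by omega, _, ?_, hchain1.concat hch' he, ?_⟩
      · simp
      · exact concat_last (m := 1) (m' := s') (T := fun i => if i = 0 then S else insert z (S.erase x)) (T' := T') he hfin'
lemma connect {r : ℕ} {R : SimpleGraph (Fin k)} {μ : ℝ}
    (hr : 2 ≤ r) (hμ : 0 < μ) (hμr : μ ≤ 1 / r)
    (hdeg : ∀ v, (1 - 1 / (r : ℝ) + μ) * k ≤ ((R.neighborSet v).ncard : ℝ))
    (hbig : (2 * r + 2 : ℝ) ≤ μ * k)
    (S1 S2 : Finset (Fin k)) (h1 : R.IsNClique r S1) (h2 : R.IsNClique r S2) :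
    ∀ Q : Finset (Fin k), Q ⊆ S2 →
      ∃ m, m ≤ (∑ i ∈ Finset.range Q.card, (r - i)) ∧
        ∃ T : ℕ → Finset (Fin k), T 0 = S1 ∧ CliqueChain R r m T ∧ Q ⊆ T m := by
  intro Q
  induction Q using Finset.cons_induction with
  | empty =>
    exact fun _ => ⟨0, by simp, fun _ => S1, rfl,
      ⟨fun i _ => h1, fun i h => absurd h (by omega)⟩, by simp⟩
  | cons y Q' hy ihQ =>
    intro hQ
    have hyS2 : y ∈ S2 := hQ (Finset.mem_cons_self _ _)
    have hQ'S2 : Q' ⊆ S2 := fun q hq => hQ (Finset.mem_cons_of_mem hq)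
    obtain ⟨m', hm', T', hT0, hch, hQT⟩ := ihQ hQ'S2
    have hScc : R.IsNClique r (T' m') := hch.1 m' le_rfl
    have hadj : ∀ p ∈ Q', R.Adj p y := by
      intro p hp
      exact h2.isClique (hQ'S2 hp) hyS2 (fun he => hy (he ▸ hp))
    have hcard : Q'.card < r := by
      have hc1 : (Finset.cons y Q' hy).card = Q'.card + 1 := Finset.card_cons hy
      have hc2 := Finset.card_le_card hQ
      rw [hc1, h2.card_eq] at hc2
      omega
    have hfilt : ((T' m').filter fun v => ¬ R.Adj v y).card ≤ r - Q'.card := by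
      have hsub : ((T' m').filter fun v => ¬ R.Adj v y) ⊆ T' m' \ Q' := by
        intro v hv
        obtain ⟨hv1, hv2⟩ := Finset.mem_filter.1 hv
        refine Finset.mem_sdiff.2 ⟨hv1, fun hvQ => hv2 (hadj v hvQ)⟩
      calc ((T' m').filter fun v => ¬ R.Adj v y).card
          ≤ (T' m' \ Q').card := Finset.card_le_card hsub
        _ = (T' m').card - Q'.card := Finset.card_sdiff_of_subset hQT
        _ = r - Q'.card := by rw [hScc.card_eq]
    obtain ⟨s, hs, Tp, hTp0, hchp, hins⟩ := phase hr hμ hμr hdeg hbig (r - Q'.card)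
      (T' m') Q' y hScc hQT hadj hcard hfilt
    have hsb : s ≤ r - Q'.card := by
      have hmax : max (r - Q'.card) 1 = r - Q'.card := by omega
      rw [hmax] at hs
      exact hs
    have he : T' m' = Tp 0 := hTp0.symm
    refine ⟨m' + s, ?_, _, ?_, hch.concat hchp he, ?_⟩
    · have hrs : (Finset.cons y Q' hy).card = Q'.card + 1 := Finset.card_cons hy
      rw [hrs, Finset.sum_range_succ]
      omega
    · show (if 0 ≤ m' then T' 0 else Tp (0 - m')) = S1
      simp [hT0]
    · have hQins : (Finset.cons y Q' hy) ⊆ Tp s := by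
        rw [Finset.cons_eq_insert]
        exact hins
      exact concat_last (m := m') (m' := s) (T := T') (T' := Tp) he hQins

lemma gauss_bound (r : ℕ) (hr : 2 ≤ r) :
    (∑ i ∈ Finset.range r, (r - i)) + 1 ≤ r ^ 2 := by
  have h1 : ∑ i ∈ Finset.range r, (r - i) = ∑ i ∈ Finset.range r, (i + 1) := by
    rw [← Finset.sum_range_reflect (fun i => i + 1) r]
    apply Finset.sum_congr rfl
    intro i hi
    rw [Finset.mem_range] at hi
    omega
  have h2 : ∑ i ∈ Finset.range r, (i + 1) = (∑ i ∈ Finset.range r, i) + r := by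
    rw [Finset.sum_add_distrib, Finset.sum_const, Finset.card_range, smul_eq_mul, mul_one]
  have h3 : (∑ i ∈ Finset.range r, i) * 2 = r * (r - 1) := Finset.sum_range_id_mul_two r
  rw [h1, h2]
  have h4 : r * (r - 1) + 2 * r + 2 ≤ 2 * r ^ 2 := by
    obtain ⟨d, rfl⟩ : ∃ d, r = d + 2 := ⟨r - 2, by omega⟩
    have he : d + 2 - 1 = d + 1 := by omega
    rw [he, pow_two]
    nlinarith
  omega
/-- Lemma 6.3: in a `k`-vertex graph `R` with `δ(R) ≥ (1 - 1/r + μ)k` (`k` large), any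
two vertex-disjoint copies of `K_r` can be joined by a chain of at most `r²` copies of
`K_{r+1}`, consecutive ones sharing exactly `r - 1` vertices. -/
theorem stmt9 (μ : ℝ) (hμ : 0 < μ) (r : ℕ) (hr : 2 ≤ r) :
    ∃ k₀ : ℕ, ∀ k : ℕ, k₀ ≤ k → ∀ R : SimpleGraph (Fin k),
      (∀ v : Fin k, (1 - 1 / (r : ℝ) + μ) * k ≤ ((R.neighborSet v).ncard : ℝ)) →
      ∀ S1 S2 : Finset (Fin k), Disjoint S1 S2 →
        R.IsNClique r S1 → R.IsNClique r S2 →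
        ∃ ℓ : ℕ, 1 ≤ ℓ ∧ ℓ ≤ r ^ 2 ∧ ∃ B : ℕ → Finset (Fin k),
          (∀ i < ℓ, R.IsNClique (r + 1) (B i)) ∧
          S1 ⊆ B 0 ∧ S2 ⊆ B (ℓ - 1) ∧
          ∀ i, i + 1 < ℓ → (B i ∩ B (i + 1)).card = r - 1 := by
  refine ⟨⌈(2 * (r : ℝ) + 2) / μ⌉₊ + 1, ?_⟩
  intro k hk R hdeg S1 S2 _hdisj h1 h2
  obtain ⟨v0, hv0⟩ : S1.Nonempty := Finset.card_pos.1 (by rw [h1.card_eq]; omega)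
  have hk0 : 0 < k := by omega
  have hbig : (2 * r + 2 : ℝ) ≤ μ * k := by
    have hle := Nat.le_ceil ((2 * (r : ℝ) + 2) / μ)
    have hk' : ((⌈(2 * (r : ℝ) + 2) / μ⌉₊ : ℕ) : ℝ) ≤ (k : ℝ) := by
      exact_mod_cast (by omega : ⌈(2 * (r : ℝ) + 2) / μ⌉₊ ≤ k)
    have h := hle.trans hk'
    rw [div_le_iff₀ hμ] at h
    linarith
  have hμr : μ ≤ 1 / r := by
    have hdlt : ((R.neighborSet v0).ncard : ℝ) < k := by
      have he : (R.neighborSet v0).ncard = R.degree v0 := by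
        rw [Set.ncard_eq_toFinset_card']
        congr 1
      rw [he]
      have hlt := R.degree_lt_card_verts v0
      rw [Fintype.card_fin] at hlt
      exact_mod_cast hlt
    have hd := hdeg v0
    have hkR : (0 : ℝ) < k := by exact_mod_cast hk0
    by_contra hcon
    push_neg at hcon
    have hr0 : (0 : ℝ) < r := by exact_mod_cast (by omega : 0 < r)
    nlinarith
  obtain ⟨m, hm, T, hT0, hch, hS2T⟩ := connect hr hμ hμr hdeg hbig S1 S2 h1 h2 S2
    (Finset.Subset.refl _)
  rw [h2.card_eq] at hm
  have hTm : T m = S2 := by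
    have := Finset.eq_of_subset_of_card_le hS2T
      (by rw [(hch.1 m le_rfl).card_eq, h2.card_eq])
    exact this.symm
  set Te : ℕ → Finset (Fin k) := fun i => T (min i m) with hTedef
  have hTe : ∀ i, R.IsNClique r (Te i) := fun i => hch.1 _ (min_le_right _ _)
  have hTemin : ∀ i, i ≤ m → Te i = T i := by
    intro i hi
    simp only [hTedef, Nat.min_eq_left hi]
  have hTeChain : ∀ i, i < m → (Te i ∩ Te (i + 1)).card = r - 1 := by
    intro i hi
    rw [hTemin i (by omega), hTemin (i + 1) (by omega)]
    exact hch.2 i hi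
  obtain ⟨pk, pk_spec⟩ : ∃ pk : Finset (Fin k) → Finset (Fin k) → Fin k,
      ∀ S A : Finset (Fin k), S.card ≤ r → A.card ≤ 2 * r + 1 →
        pk S A ∈ commonNbrs R S ∧ pk S A ∉ A := by
    refine ⟨fun S A => if h : ∃ z, z ∈ commonNbrs R S ∧ z ∉ A then h.choose else v0, ?_⟩
    intro S A hS hA
    have hex := exists_avoid (show 1 ≤ r by omega) hμ hμr hdeg hbig S A hS hA
    simp only [dif_pos hex]
    exact hex.choose_spec
  obtain ⟨w, hw0, hwsucc⟩ : ∃ w : ℕ → Fin k, w 0 = pk (Te 0) (Te 1) ∧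
      ∀ n, w (n + 1) = pk (Te (n + 1)) (Te n ∪ Te (n + 2) ∪ {w n}) :=
    ⟨fun n => Nat.rec (pk (Te 0) (Te 1))
      (fun n wn => pk (Te (n + 1)) (Te n ∪ Te (n + 2) ∪ {wn})) n, rfl, fun _ => rfl⟩
  have hcard_avoid : ∀ n, (Te n ∪ Te (n + 2) ∪ {w n}).card ≤ 2 * r + 1 := by
    intro n
    have c1 := Finset.card_union_le (Te n ∪ Te (n + 2)) ({w n} : Finset (Fin k))
    have c2 := Finset.card_union_le (Te n) (Te (n + 2))
    have c3 := (hTe n).card_eq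
    have c4 := (hTe (n + 2)).card_eq
    have c5 : ({w n} : Finset (Fin k)).card = 1 := Finset.card_singleton _
    omega
  have hwmem : ∀ n, w n ∈ commonNbrs R (Te n) := by
    intro n
    cases n with
    | zero =>
      rw [hw0]
      exact (pk_spec (Te 0) (Te 1) (le_of_eq (hTe 0).card_eq)
        (by rw [(hTe 1).card_eq]; omega)).1
    | succ p =>
      rw [hwsucc p]
      exact (pk_spec _ _ (le_of_eq (hTe (p + 1)).card_eq) (hcard_avoid p)).1
  have hwavoid : ∀ n, w (n + 1) ∉ Te n ∧ w (n + 1) ∉ Te (n + 2) ∧ w (n + 1) ≠ w n := by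
    intro n
    have h := (pk_spec (Te (n + 1)) (Te n ∪ Te (n + 2) ∪ {w n})
      (le_of_eq (hTe (n + 1)).card_eq) (hcard_avoid n)).2
    rw [← hwsucc n] at h
    refine ⟨fun hc => h ?_, fun hc => h ?_, fun hc => h ?_⟩
    · exact Finset.mem_union_left _ (Finset.mem_union_left _ hc)
    · exact Finset.mem_union_left _ (Finset.mem_union_right _ hc)
    · exact Finset.mem_union_right _ (Finset.mem_singleton.2 hc)
  have hwnotnext : ∀ n, w n ∉ Te (n + 1) := by
    intro n
    cases n with
    | zero =>
      rw [hw0]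
      exact (pk_spec (Te 0) (Te 1) (le_of_eq (hTe 0).card_eq)
        (by rw [(hTe 1).card_eq]; omega)).2
    | succ p => exact (hwavoid p).2.1
  have hgauss := gauss_bound r hr
  refine ⟨m + 1, by omega, by omega, fun i => insert (w i) (Te i), ?_, ?_, ?_, ?_⟩
  · intro i _
    constructor
    · rw [Finset.coe_insert]
      apply ((hTe i).isClique).insert
      intro b hb _
      exact (mem_commonNbrs.1 (hwmem i) b hb).symm
    · rw [Finset.card_insert_of_notMem (not_mem_of_mem_commonNbrs (hwmem i)),
        (hTe i).card_eq]
  · intro a ha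
    apply Finset.mem_insert_of_mem
    rw [hTemin 0 (Nat.zero_le m), hT0]
    exact ha
  · intro a ha
    apply Finset.mem_insert_of_mem
    have he : m + 1 - 1 = m := by omega
    rw [he, hTemin m le_rfl, hTm]
    exact ha
  · intro i hi
    have him : i < m := by omega
    have e : insert (w i) (Te i) ∩ insert (w (i + 1)) (Te (i + 1)) = Te i ∩ Te (i + 1) := by
      ext v
      simp only [Finset.mem_inter, Finset.mem_insert]
      constructor
      · rintro ⟨ha | ha, hb | hb⟩
        · exact absurd (hb.symm.trans ha) (hwavoid i).2.2
        · exact absurd (ha ▸ hb) (hwnotnext i)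
        · exact absurd (hb ▸ ha) (hwavoid i).1
        · exact ⟨ha, hb⟩
      · rintro ⟨ha, hb⟩
        exact ⟨Or.inr ha, Or.inr hb⟩
    rw [e]
    exact hTeChain i him
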